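/- arXiv:2504.21796 — 2 statements merged into one kernel-verified Lean document; each statement's English description precedes it below -/
import Mathlib

section
/- (Geometric decay lemma.) Let {β_n}_{n∈ℤ}, {j_n}_{n∈ℤ}, δ, δ', δ'' be as in the unfolding lemma (nonnegative sequences, δ,δ',δ'' ∈ [0,1], δ+δ' ≤ 1, and β_{n+1} ≤ j_{n+1} + δβ_n + (1−δ−δ')β_{n−1} + δ''(β_{n−2}+β_{n−3}+β_{n−4}) for all n), and let {b_k}_{k≥0} be defined by b_0 := δ, c_0 := 1−δ−δ', d_0 = e_0 = f_0 := δ'', and b_{k+1} := b_kδ + c_k, c_{k+1} := b_k(1−δ−δ') + d_k, d_{k+1} := b_kδ'' + e_k, e_{k+1} := b_kδ'' + f_k, f_{k+1} := b_kδ''. Suppose there exist b⋆ > 0 and θ ∈ (0,1) such that: (a) 4θδ' < 1; (b) 14δ'' ≤ (1−θ)δ'; and (c) b_k ≤ b⋆(1 − 2θδ')^k for k = 0,1,2,3,4. Then b_k ≤ b⋆(1 − θδ'/2)^k for all integers k ≥ 0. -/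
/-- Geometric decay lemma (Lemma 2.11). -/
theorem stmt9
    (β j : ℤ → ℝ) (hβ : ∀ n, 0 ≤ β n) (hj : ∀ n, 0 ≤ j n)
    (δ δ' δ'' : ℝ) (hδ : δ ∈ Set.Icc (0 : ℝ) 1) (hδ' : δ' ∈ Set.Icc (0 : ℝ) 1)
    (hδ'' : δ'' ∈ Set.Icc (0 : ℝ) 1) (hδsum : δ + δ' ≤ 1)
    (hrec : ∀ n : ℤ,
      β (n + 1) ≤ j (n + 1) + δ * β n + (1 - δ - δ') * β (n - 1)
        + δ'' * (β (n - 2) + β (n - 3) + β (n - 4)))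
    (b c d e f : ℕ → ℝ)
    (hb0 : b 0 = δ) (hc0 : c 0 = 1 - δ - δ')
    (hd0 : d 0 = δ'') (he0 : e 0 = δ'') (hf0 : f 0 = δ'')
    (hbS : ∀ k : ℕ, b (k + 1) = b k * δ + c k)
    (hcS : ∀ k : ℕ, c (k + 1) = b k * (1 - δ - δ') + d k)
    (hdS : ∀ k : ℕ, d (k + 1) = b k * δ'' + e k)
    (heS : ∀ k : ℕ, e (k + 1) = b k * δ'' + f k)
    (hfS : ∀ k : ℕ, f (k + 1) = b k * δ'')
    (bstar θ : ℝ) (hbstar : 0 < bstar) (hθ : θ ∈ Set.Ioo (0 : ℝ) 1)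
    (ha : 4 * θ * δ' < 1)
    (hbb : 14 * δ'' ≤ (1 - θ) * δ')
    (hcc : ∀ k : ℕ, k ≤ 4 → b k ≤ bstar * (1 - 2 * θ * δ') ^ k) :
    ∀ k : ℕ, b k ≤ bstar * (1 - θ * δ' / 2) ^ k := by
  obtain ⟨hδ0, hδ1⟩ := hδ
  obtain ⟨hδ'0, hδ'1⟩ := hδ'
  obtain ⟨hδ''0, hδ''1⟩ := hδ''
  obtain ⟨hθ0, hθ1⟩ := hθ
  have hθδ'0 : 0 ≤ θ * δ' := by positivity
  generalize hgen : 1 - θ * δ' / 2 = ρ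
  have hρdef : ρ = 1 - θ * δ' / 2 := hgen.symm
  have hθδ' : θ * δ' < 1 / 4 := by nlinarith
  have hρ78 : (7 : ℝ) / 8 ≤ ρ := by rw [hρdef]; nlinarith
  have hρ0 : (0 : ℝ) ≤ ρ := by linarith
  have hρ1 : ρ ≤ 1 := by rw [hρdef]; nlinarith
  have hσ0 : (0 : ℝ) ≤ 1 - 2 * θ * δ' := by nlinarith
  have hσρ : 1 - 2 * θ * δ' ≤ ρ := by rw [hρdef]; nlinarith
  have h1δ : (0 : ℝ) ≤ 1 - δ - δ' := by linarith
  have key : δ * ρ ^ 4 + (1 - δ - δ') * ρ ^ 3 + δ'' * (ρ ^ 2 + ρ + 1) ≤ ρ ^ 5 := by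
    have h1 : ρ ^ 5 - δ * ρ ^ 4 - (1 - δ - δ') * ρ ^ 3
        = ρ ^ 3 * (δ' - (1 - ρ) * (1 + ρ - δ)) := by ring
    have h2 : (1 - θ) * δ' ≤ δ' - (1 - ρ) * (1 + ρ - δ) := by
      have hε : 1 - ρ = θ * δ' / 2 := by rw [hρdef]; ring
      nlinarith [mul_nonneg hδ0 hθδ'0]
    have hρ3 : (343 : ℝ) / 512 ≤ ρ ^ 3 := by
      have := pow_le_pow_left₀ (show (0:ℝ) ≤ 7/8 by norm_num) hρ78 3
      norm_num at this ⊢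
      linarith
    have h3 : δ'' * (ρ ^ 2 + ρ + 1) ≤ 3 * δ'' := by
      have hsq : ρ ^ 2 ≤ 1 := by nlinarith [sq_nonneg ρ]
      have := mul_le_mul_of_nonneg_left (show ρ ^ 2 + ρ + 1 ≤ 3 by linarith) hδ''0
      linarith
    have h1θδ' : (0 : ℝ) ≤ (1 - θ) * δ' := by linarith
    have h4 : 3 * δ'' ≤ (343 : ℝ) / 512 * ((1 - θ) * δ') := by linarith
    have h5 : (343 : ℝ) / 512 * ((1 - θ) * δ') ≤ ρ ^ 3 * (δ' - (1 - ρ) * (1 + ρ - δ)) :=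
      mul_le_mul hρ3 h2 h1θδ' (pow_nonneg hρ0 3)
    linarith [h1, h3, h4, h5]
  intro k
  induction k using Nat.strong_induction_on with
  | _ k ih =>
    by_cases hk : k ≤ 4
    · calc b k ≤ bstar * (1 - 2 * θ * δ') ^ k := hcc k hk
        _ ≤ bstar * ρ ^ k :=
            mul_le_mul_of_nonneg_left (pow_le_pow_left₀ hσ0 hσρ k) hbstar.le
    · obtain ⟨m, rfl⟩ : ∃ m, k = m + 5 := ⟨k - 5, by omega⟩
      have e1 : b (m + 5) = b (m + 4) * δ + c (m + 4) := hbS (m + 4)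
      have e2 : c (m + 4) = b (m + 3) * (1 - δ - δ') + d (m + 3) := hcS (m + 3)
      have e3 : d (m + 3) = b (m + 2) * δ'' + e (m + 2) := hdS (m + 2)
      have e4 : e (m + 2) = b (m + 1) * δ'' + f (m + 1) := heS (m + 1)
      have e5 : f (m + 1) = b m * δ'' := hfS m
      have hb4 := ih (m + 4) (by omega)
      have hb3 := ih (m + 3) (by omega)
      have hb2 := ih (m + 2) (by omega)
      have hb1 := ih (m + 1) (by omega)
      have hb0' := ih m (by omega)
      have hbpm : (0 : ℝ) ≤ bstar * ρ ^ m := by positivity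
      have step1 : b (m + 5) ≤ (bstar * ρ ^ (m + 4)) * δ
          + ((bstar * ρ ^ (m + 3)) * (1 - δ - δ')
          + ((bstar * ρ ^ (m + 2)) * δ''
          + ((bstar * ρ ^ (m + 1)) * δ'' + (bstar * ρ ^ m) * δ''))) := by
        rw [e1, e2, e3, e4, e5]
        have t1 := mul_le_mul_of_nonneg_right hb4 hδ0
        have t2 := mul_le_mul_of_nonneg_right hb3 h1δ
        have t3 := mul_le_mul_of_nonneg_right hb2 hδ''0
        have t4 := mul_le_mul_of_nonneg_right hb1 hδ''0
        have t5 := mul_le_mul_of_nonneg_right hb0' hδ''0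
        linarith
      have step2 : (bstar * ρ ^ m) * (δ * ρ ^ 4 + (1 - δ - δ') * ρ ^ 3
          + δ'' * (ρ ^ 2 + ρ + 1)) ≤ (bstar * ρ ^ m) * ρ ^ 5 :=
        mul_le_mul_of_nonneg_left key hbpm
      calc b (m + 5) ≤ _ := step1
        _ = (bstar * ρ ^ m) * (δ * ρ ^ 4 + (1 - δ - δ') * ρ ^ 3
            + δ'' * (ρ ^ 2 + ρ + 1)) := by
            simp only [pow_add]; ring
        _ ≤ (bstar * ρ ^ m) * ρ ^ 5 := step2
        _ = bstar * ρ ^ (m + 5) := by rw [pow_add]; ring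
end

section
/- (Expansion of the Bessel-ratio first-passage function; Lemma on R⁰.) Define K₀(x) := ∫₀^∞ e^{−x cosh t} dt for x > 0 and I₀(x) := (1/π)∫₀^π e^{x cos θ} dθ for x ≥ 0, and for ν > 0 and a, b > 0 set R⁰_ν(a,b) := K₀(a√(2ν))/K₀(b√(2ν)) if a ≥ b, and R⁰_ν(a,b) := I₀(a√(2ν))/I₀(b√(2ν)) if a ≤ b. Then for every M > 0 there exist C(M) > 0 and ν₀(M) > 0 such that for all ν ∈ (0,ν₀] and all a, b with 0 < a, b ≤ M: | R⁰_ν(a,b) − 1 + log⁻(b/a)/log(1/√(2ν)) | ≤ C(M) [ (a∨b)² · 2ν · log(1/((a∨b)√(2ν))) + (|log b|·1_{a≥b} + 1)(log⁻(b/a) + 1)/(log √(2ν))² ], where log⁻(x) := −log(min(x,1)) and a∨b := max(a,b). -/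
open MeasureTheory

noncomputable section

/-- The Macdonald function `K₀`. -/
def K0 (x : ℝ) : ℝ := ∫ t in Set.Ioi (0 : ℝ), Real.exp (-x * Real.cosh t)

/-- The modified Bessel function `I₀`. -/
def I0 (x : ℝ) : ℝ := (1 / Real.pi) * ∫ θ in (0 : ℝ)..Real.pi, Real.exp (x * Real.cos θ)

/-- The Bessel-ratio first-passage function `R⁰_ν(a,b)`. -/
def R0 (ν a b : ℝ) : ℝ :=
  if b ≤ a then K0 (a * Real.sqrt (2 * ν)) / K0 (b * Real.sqrt (2 * ν))
  else I0 (a * Real.sqrt (2 * ν)) / I0 (b * Real.sqrt (2 * ν))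

/-- `log⁻(x) = -log (min x 1)`. -/
def logMinus (x : ℝ) : ℝ := -Real.log (min x 1)

end

open Set Real

noncomputable section
/-- dominating function facts -/
lemma cosh_ge (t : ℝ) (ht : 0 ≤ t) : (1 + t) / 2 ≤ Real.cosh t := by
  have h1 : Real.exp t ≤ 2 * Real.cosh t := by
    rw [Real.cosh_eq]; have := Real.exp_pos (-t); linarith
  have h2 : 1 + t ≤ Real.exp t := by have := Real.add_one_le_exp t; linarith
  linarith

lemma integrableOn_K0 {x : ℝ} (hx : 0 < x) :
    IntegrableOn (fun t => Real.exp (-x * Real.cosh t)) (Ioi (0:ℝ)) := by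
  have hdom : IntegrableOn (fun t => Real.exp (-(x/2)) * Real.exp (-(x/2) * t)) (Ioi (0:ℝ)) :=
    ((exp_neg_integrableOn_Ioi 0 (by linarith : (0:ℝ) < x/2))).const_mul _
  refine hdom.mono' (Continuous.aestronglyMeasurable (by continuity)) ?_
  filter_upwards [ae_restrict_mem measurableSet_Ioi] with t ht
  rw [Real.norm_eq_abs, abs_of_pos (Real.exp_pos _), ← Real.exp_add]
  apply Real.exp_le_exp.2
  have := cosh_ge t (le_of_lt ht)
  nlinarith

lemma exp_half_le (x t : ℝ) (hx : 0 < x) (ht : 0 ≤ t) :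
    Real.exp (-(x/2) * Real.exp t) ≤ Real.exp (-(x/2)) * Real.exp (-(x/2) * t) := by
  rw [← Real.exp_add]
  apply Real.exp_le_exp.2
  have h2 : 1 + t ≤ Real.exp t := by have := Real.add_one_le_exp t; linarith
  nlinarith

lemma integrableOn_F {x : ℝ} (hx : 0 < x) :
    IntegrableOn (fun t => Real.exp (-(x/2) * Real.exp t)) (Ioi (0:ℝ)) := by
  have hdom : IntegrableOn (fun t => Real.exp (-(x/2)) * Real.exp (-(x/2) * t)) (Ioi (0:ℝ)) :=
    ((exp_neg_integrableOn_Ioi 0 (by linarith : (0:ℝ) < x/2))).const_mul _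
  refine hdom.mono' (Continuous.aestronglyMeasurable (by continuity)) ?_
  filter_upwards [ae_restrict_mem measurableSet_Ioi] with t ht
  rw [Real.norm_eq_abs, abs_of_pos (Real.exp_pos _)]
  exact exp_half_le x t hx (le_of_lt ht)

end

noncomputable section
def Fa (x : ℝ) : ℝ := ∫ t in Ioi (0:ℝ), Real.exp (-(x/2) * Real.exp t)

lemma K0_le_F {x : ℝ} (hx : 0 < x) : K0 x ≤ Fa x := by
  apply setIntegral_mono_on (integrableOn_K0 hx) (integrableOn_F hx) measurableSet_Ioi
  intro t ht
  apply Real.exp_le_exp.2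
  have h : Real.cosh t = (Real.exp t + Real.exp (-t))/2 := Real.cosh_eq t
  nlinarith [Real.exp_pos (-t)]

lemma F_sub_K0 {x : ℝ} (hx : 0 < x) : Fa x - K0 x ≤ x / 2 := by
  have hI : IntegrableOn (fun t => Real.exp (-(x/2) * Real.exp t) - Real.exp (-x * Real.cosh t)) (Ioi (0:ℝ)) :=
    (integrableOn_F hx).sub (integrableOn_K0 hx)
  have heq : Fa x - K0 x = ∫ t in Ioi (0:ℝ),
      (Real.exp (-(x/2) * Real.exp t) - Real.exp (-x * Real.cosh t)) := by
    rw [Fa, K0, ← integral_sub (integrableOn_F hx) (integrableOn_K0 hx)]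
  rw [heq]
  have hb : ∀ t ∈ Ioi (0:ℝ),
      Real.exp (-(x/2) * Real.exp t) - Real.exp (-x * Real.cosh t) ≤ (x/2) * Real.exp (-t) := by
    intro t ht
    have hc : Real.cosh t = (Real.exp t + Real.exp (-t))/2 := Real.cosh_eq t
    have key : -x * Real.cosh t = -(x/2) * Real.exp t + (-(x/2) * Real.exp (-t)) := by
      rw [hc]; ring
    rw [key, Real.exp_add]
    have h1 : 1 - Real.exp (-(x/2) * Real.exp (-t)) ≤ (x/2) * Real.exp (-t) := by
      have := Real.add_one_le_exp (-(x/2) * Real.exp (-t)); linarith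
    have h2 : Real.exp (-(x/2) * Real.exp t) ≤ 1 := by
      apply Real.exp_le_one_iff.2; nlinarith [Real.exp_pos t]
    have h3 : Real.exp (-(x/2) * Real.exp (-t)) ≤ 1 := by
      apply Real.exp_le_one_iff.2; nlinarith [Real.exp_pos (-t)]
    nlinarith [mul_nonneg (sub_nonneg.2 h2) (sub_nonneg.2 h3), Real.exp_pos (-(x/2) * Real.exp t)]
  calc ∫ t in Ioi (0:ℝ), (Real.exp (-(x/2) * Real.exp t) - Real.exp (-x * Real.cosh t))
      ≤ ∫ t in Ioi (0:ℝ), (x/2) * Real.exp (-t) := by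
        apply setIntegral_mono_on hI ?_ measurableSet_Ioi hb
        have h := ((exp_neg_integrableOn_Ioi 0 (by norm_num : (0:ℝ) < 1)).const_mul (x/2))
        simp only [neg_mul, one_mul] at h; exact h
    _ = (x/2) * ∫ t in Ioi (0:ℝ), Real.exp (-t) := by rw [integral_const_mul]
    _ = x/2 := by rw [integral_exp_neg_Ioi]; simp

lemma F_eq_E1 {x : ℝ} (hx : 0 < x) :
    Fa x = ∫ u in Ioi (x/2), Real.exp (-u) / u := by
  have himg : (fun t => (x/2) * Real.exp t) '' (Ioi (0:ℝ)) = Ioi (x/2) := by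
    ext u
    constructor
    · rintro ⟨t, ht, rfl⟩
      have h1t : (1:ℝ) < Real.exp t := by
        have := Real.add_one_le_exp t; simp only [mem_Ioi] at ht; linarith
      have : x/2 < x/2 * Real.exp t := by nlinarith
      simpa using this
    · intro hu
      simp only [mem_Ioi] at hu
      refine ⟨Real.log (u / (x/2)), ?_, ?_⟩
      · apply Real.log_pos; rw [lt_div_iff₀ (by linarith)]; linarith
      · show x/2 * Real.exp (Real.log (u / (x/2))) = u
        have hu0 : 0 < u := lt_trans (by positivity) hu
        rw [Real.exp_log (by positivity)]; field_simp
  have := integral_image_eq_integral_abs_deriv_smul (s := Ioi (0:ℝ))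
    (f := fun t => (x/2) * Real.exp t)
    (f' := fun t => (x/2) * Real.exp t) measurableSet_Ioi
    (fun t _ => ((Real.hasDerivAt_exp t).const_mul (x/2)).hasDerivWithinAt)
    (fun t₁ _ t₂ _ h => by
      have := mul_left_cancel₀ (by linarith : (x:ℝ)/2 ≠ 0) h
      exact Real.exp_injective this)
    (fun u => Real.exp (-u) / u)
  rw [himg] at this
  rw [Fa, this]
  apply setIntegral_congr_fun measurableSet_Ioi
  intro t _
  have hpos : (0:ℝ) < x/2 * Real.exp t := by positivity
  show Real.exp (-(x/2) * Real.exp t) = |x/2 * Real.exp t| • (Real.exp (-(x/2 * Real.exp t)) / (x/2 * Real.exp t))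
  rw [abs_of_pos hpos, smul_eq_mul, neg_mul]
  field_simp
end

noncomputable section
def hE (u : ℝ) : ℝ := (Real.exp (-u) - 1) / u

def L1 : ℝ := (∫ u in Ioc (0:ℝ) 1, hE u) + ∫ u in Ioi (1:ℝ), Real.exp (-u) / u

lemma integrableOn_E1 {y : ℝ} (hy : 0 < y) :
    IntegrableOn (fun u => Real.exp (-u) / u) (Ioi y) := by
  have hdom : IntegrableOn (fun u => (1/y) * Real.exp (-1 * u)) (Ioi y) :=
    (exp_neg_integrableOn_Ioi y one_pos).const_mul _
  refine hdom.mono' ?_ ?_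
  · apply Measurable.aestronglyMeasurable
    exact (Real.measurable_exp.comp measurable_neg).div measurable_id
  · filter_upwards [ae_restrict_mem measurableSet_Ioi] with u hu
    simp only [mem_Ioi] at hu
    have hu0 : 0 < u := lt_trans hy hu
    rw [Real.norm_eq_abs, abs_of_pos (by positivity)]
    rw [div_le_iff₀ hu0]
    have : Real.exp (-1 * u) = Real.exp (-u) := by norm_num
    rw [this]
    have h1 : (1/y) * Real.exp (-u) * u = Real.exp (-u) * (u / y) := by ring
    rw [h1]
    have h2 : (1:ℝ) ≤ u / y := (one_le_div hy).2 hu.le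
    nlinarith [Real.exp_pos (-u)]

lemma integrableOn_hE : IntegrableOn hE (Ioc (0:ℝ) 1) := by
  have hmeas : Measurable hE := ((Real.measurable_exp.comp measurable_neg).sub measurable_const).div measurable_id
  refine Integrable.mono' (g := fun _ => (1:ℝ)) (integrableOn_const ?_) hmeas.aestronglyMeasurable ?_
  · rw [Real.volume_Ioc]; exact ENNReal.ofReal_ne_top
  · filter_upwards [ae_restrict_mem measurableSet_Ioc] with u hu
    obtain ⟨hu0, hu1⟩ := hu
    rw [Real.norm_eq_abs, hE, abs_div, abs_of_pos hu0, div_le_iff₀ hu0, one_mul]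
    rw [abs_sub_comm, abs_of_nonneg (by nlinarith [Real.exp_le_one_iff.2 (by linarith : -u ≤ 0)])]
    nlinarith [Real.add_one_le_exp (-u)]

lemma hE_bound {y : ℝ} (hy : 0 < y) (hy1 : y ≤ 1) : |∫ u in Ioc (0:ℝ) y, hE u| ≤ y := by
  have := norm_setIntegral_le_of_norm_le_const (μ := volume) (s := Ioc (0:ℝ) y) (f := hE) (C := 1)
    (by rw [Real.volume_Ioc]; exact ENNReal.ofReal_lt_top)
    ?_
  · rw [Real.norm_eq_abs] at this
    calc |∫ u in Ioc (0:ℝ) y, hE u| ≤ 1 * (volume (Ioc (0:ℝ) y)).toReal := this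
      _ = y := by rw [Real.volume_Ioc, one_mul, ENNReal.toReal_ofReal (by linarith)]; ring
  · intro u hu
    obtain ⟨hu0, huy⟩ := hu
    rw [Real.norm_eq_abs, hE, abs_div, abs_of_pos hu0, div_le_iff₀ hu0, one_mul]
    rw [abs_sub_comm, abs_of_nonneg (by nlinarith [Real.exp_le_one_iff.2 (by linarith : -u ≤ 0)])]
    nlinarith [Real.add_one_le_exp (-u)]

lemma E1_expand {y : ℝ} (hy : 0 < y) (hy1 : y ≤ 1) :
    |(∫ u in Ioi y, Real.exp (-u) / u) - (- Real.log y) - L1| ≤ y := by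
  have hIoc1 : IntegrableOn (fun u => Real.exp (-u) / u) (Ioc y 1) :=
    (integrableOn_E1 hy).mono_set Ioc_subset_Ioi_self
  have hsplit : (∫ u in Ioi y, Real.exp (-u) / u)
      = (∫ u in Ioc y 1, Real.exp (-u) / u) + ∫ u in Ioi (1:ℝ), Real.exp (-u) / u := by
    rw [← setIntegral_union (Ioc_disjoint_Ioi le_rfl) measurableSet_Ioi hIoc1
      (integrableOn_E1 one_pos), Ioc_union_Ioi_eq_Ioi hy1]
  have hone : IntegrableOn (fun u => 1/u) (Ioc y 1) := by
    refine (ContinuousOn.integrableOn_Icc ?_).mono_set Ioc_subset_Icc_self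
    exact ContinuousOn.div continuousOn_const continuousOn_id
      (fun u hu => ne_of_gt (lt_of_lt_of_le hy hu.1))
  have hhE1 : IntegrableOn hE (Ioc y 1) := integrableOn_hE.mono_set
    (Ioc_subset_Ioc (le_of_lt hy) le_rfl)
  have hdecomp : (∫ u in Ioc y 1, Real.exp (-u) / u)
      = (∫ u in Ioc y 1, 1/u) + ∫ u in Ioc y 1, hE u := by
    rw [← integral_add hone hhE1]
    apply setIntegral_congr_fun measurableSet_Ioc
    intro u hu
    have hu0 : (0:ℝ) < u := lt_trans hy hu.1
    show Real.exp (-u)/u = 1/u + hE u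
    rw [hE]; field_simp; ring
  have hlog : (∫ u in Ioc y 1, 1/u) = - Real.log y := by
    rw [← intervalIntegral.integral_of_le hy1, integral_one_div]
    · rw [Real.log_div one_ne_zero (ne_of_gt hy), Real.log_one]; ring
    · intro h
      rcases h with ⟨h1, h2⟩
      simp only [inf_le_iff, le_inf_iff] at *
      rcases h1 with h | h <;> linarith
  have hhEsplit : (∫ u in Ioc (0:ℝ) 1, hE u)
      = (∫ u in Ioc (0:ℝ) y, hE u) + ∫ u in Ioc y 1, hE u := by
    rw [← setIntegral_union (Ioc_disjoint_Ioc_of_le le_rfl) measurableSet_Ioc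
      (integrableOn_hE.mono_set (Ioc_subset_Ioc le_rfl hy1)) hhE1,
      Ioc_union_Ioc_eq_Ioc (le_of_lt hy) hy1]
  have key : (∫ u in Ioi y, Real.exp (-u) / u) - (- Real.log y) - L1
      = - ∫ u in Ioc (0:ℝ) y, hE u := by
    rw [hsplit, hdecomp, hlog, L1, hhEsplit]; ring
  rw [key, abs_neg]
  exact hE_bound hy hy1

def LC : ℝ := Real.log 2 + L1

lemma K0_expand {x : ℝ} (hx : 0 < x) (hx1 : x ≤ 1) :
    |K0 x - Real.log (1/x) - LC| ≤ x := by
  have h1 : |K0 x - Fa x| ≤ x/2 := by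
    rw [abs_sub_comm, abs_of_nonneg (by linarith [K0_le_F hx])]
    exact F_sub_K0 hx
  have h2 : Fa x = ∫ u in Ioi (x/2), Real.exp (-u) / u := F_eq_E1 hx
  have h3 : |(∫ u in Ioi (x/2), Real.exp (-u) / u) - (- Real.log (x/2)) - L1| ≤ x/2 :=
    E1_expand (by linarith) (by linarith)
  have hlog2 : - Real.log (x/2) = Real.log (1/x) + Real.log 2 := by
    rw [Real.log_div (ne_of_gt hx) two_ne_zero, one_div, Real.log_inv]; ring
  rw [LC]
  have : K0 x - Real.log (1/x) - (Real.log 2 + L1)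
      = (K0 x - Fa x) + ((∫ u in Ioi (x/2), Real.exp (-u) / u) - (- Real.log (x/2)) - L1) := by
    rw [h2, hlog2]; ring
  rw [this]
  calc |_ + _| ≤ |K0 x - Fa x| + |(∫ u in Ioi (x/2), Real.exp (-u) / u) - (- Real.log (x/2)) - L1| := abs_add_le _ _
    _ ≤ x/2 + x/2 := add_le_add h1 h3
    _ = x := by ring
end

lemma I0_sub_one {x : ℝ} (hx0 : 0 ≤ x) (hx1 : x ≤ 1) : |I0 x - 1| ≤ x^2 := by
  have hπ := Real.pi_pos
  have hg : IntervalIntegrable (fun θ : ℝ => Real.exp (x * Real.cos θ) - 1 - x * Real.cos θ)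
      volume 0 Real.pi := Continuous.intervalIntegrable (by continuity) 0 Real.pi
  have hlin : IntervalIntegrable (fun θ : ℝ => 1 + x * Real.cos θ) volume 0 Real.pi :=
    Continuous.intervalIntegrable (by continuity) 0 Real.pi
  have hsplit : (∫ θ in (0:ℝ)..Real.pi, Real.exp (x * Real.cos θ))
      = (∫ θ in (0:ℝ)..Real.pi, (Real.exp (x * Real.cos θ) - 1 - x * Real.cos θ))
        + ∫ θ in (0:ℝ)..Real.pi, (1 + x * Real.cos θ) := by
    rw [← intervalIntegral.integral_add hg hlin]
    apply intervalIntegral.integral_congr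
    intro θ _; ring
  have hlinval : (∫ θ in (0:ℝ)..Real.pi, (1 + x * Real.cos θ)) = Real.pi := by
    rw [intervalIntegral.integral_add
      (Continuous.intervalIntegrable (continuous_const) 0 Real.pi)
      (Continuous.intervalIntegrable (by continuity) 0 Real.pi),
      intervalIntegral.integral_const, intervalIntegral.integral_const_mul, integral_cos]
    simp
  have hbound : |∫ θ in (0:ℝ)..Real.pi, (Real.exp (x * Real.cos θ) - 1 - x * Real.cos θ)|
      ≤ x^2 * |Real.pi - 0| := by
    rw [← Real.norm_eq_abs]
    apply intervalIntegral.norm_integral_le_of_norm_le_const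
    intro θ _
    rw [Real.norm_eq_abs]
    have hc : |Real.cos θ| ≤ 1 := Real.abs_cos_le_one θ
    have h1 : |x * Real.cos θ| ≤ 1 := by
      rw [abs_mul, abs_of_nonneg hx0]
      nlinarith
    calc |Real.exp (x * Real.cos θ) - 1 - x * Real.cos θ| ≤ (x * Real.cos θ)^2 :=
        Real.abs_exp_sub_one_sub_id_le h1
      _ ≤ x^2 := by
        rw [mul_pow]
        nlinarith [Real.cos_sq_le_one θ, sq_nonneg x]
  have hI : I0 x - 1 = (1/Real.pi) * ∫ θ in (0:ℝ)..Real.pi,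
      (Real.exp (x * Real.cos θ) - 1 - x * Real.cos θ) := by
    rw [I0, hsplit, hlinval]
    field_simp; ring
  rw [hI, abs_mul, abs_of_pos (by positivity : (0:ℝ) < 1/Real.pi)]
  rw [abs_of_nonneg (by linarith : (0:ℝ) ≤ Real.pi - 0)] at hbound
  calc 1/Real.pi * |∫ θ in (0:ℝ)..Real.pi, (Real.exp (x * Real.cos θ) - 1 - x * Real.cos θ)|
      ≤ 1/Real.pi * (x^2 * (Real.pi - 0)) := by
        apply mul_le_mul_of_nonneg_left hbound (by positivity)
    _ = x^2 := by field_simp; ring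

lemma bound_aux {lb lc lam m : ℝ} (hlb : 0 ≤ lb) (hlc : 0 ≤ lc) (hlam : 0 ≤ lam)
    (hm : 0 ≤ m) :
    2*lam*(lb + lc + 1) + 16*m ≤ (2*(lc+2)+16*m+4)*((lb * 1+1)*(lam+1)) := by
  nlinarith [mul_nonneg hlc (mul_nonneg hlb hlam), mul_nonneg hlc hlb,
    mul_nonneg hlb hlam, mul_nonneg hm (mul_nonneg hlb hlam), mul_nonneg hm hlb,
    mul_nonneg hm hlam, mul_nonneg hlc hlam]

lemma ratio_ident {nn dd l lam ea eb : ℝ} (hd : dd ≠ 0) (hl : l ≠ 0)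
    (h : nn - dd = -lam + (ea - eb)) :
    nn/dd - 1 + lam/l = (lam*(dd - l) + l*(ea - eb))/(dd*l) := by
  have hnn : nn = dd - lam + (ea - eb) := by linarith
  rw [hnn]
  field_simp
  ring

noncomputable section
set_option maxHeartbeats 2000000 in
/-- Expansion of the Bessel-ratio first-passage function (Lemma 3.3 (3°)). -/

theorem stmt11 :
    ∀ M : ℝ, 0 < M → ∃ C > (0 : ℝ), ∃ ν₀ > (0 : ℝ),
      ∀ ν ∈ Set.Ioc (0 : ℝ) ν₀, ∀ a b : ℝ,
        0 < a → a ≤ M → 0 < b → b ≤ M →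
          |R0 ν a b - 1 + logMinus (b / a) / Real.log (1 / Real.sqrt (2 * ν))| ≤
            C * ((max a b) ^ 2 * (2 * ν) *
                Real.log (1 / ((max a b) * Real.sqrt (2 * ν)))
              + (|Real.log b| * (if b ≤ a then (1 : ℝ) else 0) + 1) *
                  (logMinus (b / a) + 1) / (Real.log (Real.sqrt (2 * ν))) ^ 2) := by
  intro M hM
  set KK : ℝ := |LC| + 2 with hKK
  have hKK2 : 2 ≤ KK := by rw [hKK]; have := abs_nonneg LC; linarith
  refine ⟨2*KK + 16*M + 4, by positivity, ?_⟩
  set A : ℝ := max 9 (2*(|Real.log M| + |LC| + 2)) with hA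
  set s₀ : ℝ := min (1/(3*M)) (Real.exp (-A)) with hs₀def
  have hs₀ : 0 < s₀ := lt_min (by positivity) (Real.exp_pos _)
  refine ⟨s₀^2/2, by positivity, ?_⟩
  rintro ν ⟨hν0, hν1⟩ a b ha haM hb hbM
  set s := Real.sqrt (2*ν) with hs_def
  have hs0 : 0 < s := Real.sqrt_pos.2 (by linarith)
  have hs2 : s^2 = 2*ν := Real.sq_sqrt (by linarith)
  have hss₀ : s ≤ s₀ := by
    have h1 : (2:ℝ)*ν ≤ s₀^2 := by linarith
    calc s = Real.sqrt (2*ν) := rfl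
      _ ≤ Real.sqrt (s₀^2) := Real.sqrt_le_sqrt h1
      _ = s₀ := Real.sqrt_sq hs₀.le
  have hsM : M * s ≤ 1/3 := by
    have h1 : s ≤ 1/(3*M) := le_trans hss₀ (min_le_left _ _)
    calc M * s ≤ M * (1/(3*M)) := mul_le_mul_of_nonneg_left h1 hM.le
      _ = 1/3 := by field_simp
  set ℓ := -Real.log s with hℓdef
  have hℓA : A ≤ ℓ := by
    have h1 : s ≤ Real.exp (-A) := le_trans hss₀ (min_le_right _ _)
    have h2 : Real.log s ≤ -A := by
      calc Real.log s ≤ Real.log (Real.exp (-A)) := Real.log_le_log hs0 h1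
        _ = -A := Real.log_exp _
    linarith
  have hℓ9 : 9 ≤ ℓ := le_trans (le_max_left _ _) hℓA
  have hℓ2 : 2*(|Real.log M| + |LC| + 2) ≤ ℓ := le_trans (le_max_right _ _) hℓA
  have hℓpos : 0 < ℓ := by linarith
  have hsexp : s = Real.exp (-ℓ) := by rw [hℓdef, neg_neg, Real.exp_log hs0]
  clear_value ℓ
  clear_value s
  have hsl : s * ℓ^2 ≤ 4 := by
    have h1 : 1 + ℓ/2 ≤ Real.exp (ℓ/2) := by have := Real.add_one_le_exp (ℓ/2); linarith
    have h2 : ℓ^2/4 ≤ Real.exp ℓ := by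
      have : Real.exp ℓ = Real.exp (ℓ/2) * Real.exp (ℓ/2) := by
        rw [← Real.exp_add]; ring_nf
      nlinarith [Real.exp_pos (ℓ/2)]
    rw [hsexp, Real.exp_neg]
    rw [inv_mul_le_iff₀ (Real.exp_pos ℓ)]
    linarith only [h2]
  have hsl4 : s * ℓ ≤ 4 := by
    have h1 : (s*ℓ)*9 ≤ (s*ℓ)*ℓ := mul_le_mul_of_nonneg_left hℓ9 (mul_pos hs0 hℓpos).le
    have h2 : (s*ℓ)*ℓ = s*ℓ^2 := by ring
    linarith only [h1, h2, hsl]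
  have hlog1 : Real.log (1/s) = ℓ := by rw [one_div, Real.log_inv, hℓdef]
  have hlogsq : (Real.log s)^2 = ℓ^2 := by rw [hℓdef]; ring
  have has1 : a * s ≤ 1/3 := le_trans (mul_le_mul_of_nonneg_right haM hs0.le) hsM
  have hbs1 : b * s ≤ 1/3 := le_trans (mul_le_mul_of_nonneg_right hbM hs0.le) hsM
  have haspos : 0 < a * s := by positivity
  have hbspos : 0 < b * s := by positivity
  -- log (1/(z*s)) = ℓ - log z
  have hlogz : ∀ z : ℝ, 0 < z → Real.log (1/(z*s)) = ℓ - Real.log z := by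
    intro z hz
    rw [one_div, Real.log_inv, Real.log_mul (ne_of_gt hz) (ne_of_gt hs0), hℓdef]
    ring
  by_cases hba : b ≤ a
  · -- K0 case
    have hmax : max a b = a := max_eq_left hba
    set N := K0 (a*s) with hN
    set D := K0 (b*s) with hD
    obtain ⟨ea, hNid, hea⟩ : ∃ e, N = ℓ - Real.log a + LC + e ∧ |e| ≤ a*s := by
      refine ⟨N - (ℓ - Real.log a + LC), by ring, ?_⟩
      have heq : N - (ℓ - Real.log a + LC) = K0 (a*s) - Real.log (1/(a*s)) - LC := by
        rw [hN, hlogz a ha]; ring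
      rw [heq]; exact K0_expand haspos (by linarith only [has1])
    obtain ⟨eb, hDid, heb⟩ : ∃ e, D = ℓ - Real.log b + LC + e ∧ |e| ≤ b*s := by
      refine ⟨D - (ℓ - Real.log b + LC), by ring, ?_⟩
      have heq : D - (ℓ - Real.log b + LC) = K0 (b*s) - Real.log (1/(b*s)) - LC := by
        rw [hD, hlogz b hb]; ring
      rw [heq]; exact K0_expand hbspos (by linarith only [hbs1])
    have heb1 : |eb| ≤ 1 := le_trans heb (by linarith only [hbs1])
    have hlogbM : Real.log b ≤ |Real.log M| :=
      le_trans (Real.log_le_log hb hbM) (le_abs_self _)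
    have hDge : ℓ/2 ≤ D := by
      rw [hDid]
      have h1 : -|LC| ≤ LC := neg_abs_le LC
      have h2 : -(1:ℝ) ≤ eb := by have := abs_le.1 heb1; linarith only [this.1]
      linarith only [h1, h2, hlogbM, hℓ2, abs_nonneg LC]
    have hDpos : 0 < D := by linarith only [hDge, hℓ9]
    have hlm : logMinus (b/a) = Real.log a - Real.log b := by
      rw [logMinus, min_eq_left ((div_le_one ha).2 hba),
        Real.log_div (ne_of_gt hb) (ne_of_gt ha)]
      ring
    set lam := Real.log a - Real.log b with hlam
    have hlam0 : 0 ≤ lam := by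
      have h := Real.log_le_log hb hba; rw [hlam]; linarith only [h]
    have hR0 : R0 ν a b = N/D := by rw [R0, if_pos hba, ← hs_def, ← hN, ← hD]
    clear_value N D lam
    have hsub : N - D = -lam + (ea - eb) := by rw [hNid, hDid, hlam]; ring
    have hident : N/D - 1 + lam/ℓ = (lam*(D - ℓ) + ℓ*(ea - eb))/(D*ℓ) :=
      ratio_ident (ne_of_gt hDpos) (ne_of_gt hℓpos) hsub
    rw [hR0, hlm, hlog1, hident]
    have hnum : |lam*(D - ℓ) + ℓ*(ea - eb)| ≤ lam*(|Real.log b| + |LC| + 1) + ℓ*(2*M*s) := by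
      have h1 : |lam*(D-ℓ)| ≤ lam*(|Real.log b| + |LC| + 1) := by
        rw [abs_mul, abs_of_nonneg hlam0]
        apply mul_le_mul_of_nonneg_left ?_ hlam0
        have hq : D - ℓ = -Real.log b + LC + eb := by rw [hDid]; ring
        rw [hq]
        calc |(-Real.log b) + LC + eb| ≤ |(-Real.log b) + LC| + |eb| := abs_add_le _ _
          _ ≤ |(-Real.log b)| + |LC| + |eb| := by linarith only [abs_add_le (-Real.log b) LC]
          _ ≤ |Real.log b| + |LC| + 1 := by rw [abs_neg]; linarith only [heb1]
      have h2 : |ℓ*(ea - eb)| ≤ ℓ*(2*M*s) := by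
        rw [abs_mul, abs_of_pos hℓpos]
        apply mul_le_mul_of_nonneg_left ?_ hℓpos.le
        have has' : a*s ≤ M*s := mul_le_mul_of_nonneg_right haM hs0.le
        have hbs' : b*s ≤ M*s := mul_le_mul_of_nonneg_right hbM hs0.le
        calc |ea - eb| ≤ |ea| + |eb| := abs_sub _ _
          _ ≤ 2*M*s := by linarith only [hea, heb, has', hbs']
      calc |lam*(D - ℓ) + ℓ*(ea - eb)| ≤ |lam*(D-ℓ)| + |ℓ*(ea-eb)| := abs_add_le _ _
        _ ≤ _ := add_le_add h1 h2
    have hden : ℓ^2/2 ≤ D*ℓ := by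
      have h := mul_le_mul_of_nonneg_right hDge hℓpos.le
      have h2 : ℓ^2/2 = ℓ/2*ℓ := by ring
      linarith only [h, h2]
    have key : |(lam*(D - ℓ) + ℓ*(ea - eb))/(D*ℓ)|
        ≤ (2*lam*(|Real.log b| + |LC| + 1) + 16*M)/ℓ^2 := by
      rw [abs_div, abs_of_pos (by positivity : (0:ℝ) < D*ℓ)]
      calc |lam*(D - ℓ) + ℓ*(ea - eb)|/(D*ℓ)
          ≤ (lam*(|Real.log b| + |LC| + 1) + ℓ*(2*M*s))/(ℓ^2/2) :=
            div_le_div₀ (by positivity) hnum (by positivity) hden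
        _ = (2*lam*(|Real.log b| + |LC| + 1) + 4*M*(s*ℓ))/ℓ^2 := by
            field_simp; ring
        _ ≤ (2*lam*(|Real.log b| + |LC| + 1) + 16*M)/ℓ^2 := by
            apply div_le_div_of_nonneg_right ?_ (by positivity)
            have h4 : 4*M*(s*ℓ) ≤ 4*M*4 := mul_le_mul_of_nonneg_left hsl4 (by positivity)
            linarith only [h4]
    refine le_trans key ?_
    rw [hmax, hlogsq, if_pos hba]
    have ht1 : 0 ≤ a^2 * (2*ν) * Real.log (1/(a*s)) := by
      apply mul_nonneg (by positivity)
      rw [hlogz a ha]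
      have hlaM : Real.log a ≤ |Real.log M| :=
        le_trans (Real.log_le_log ha haM) (le_abs_self _)
      have hLCn := abs_nonneg LC
      linarith only [hℓ2, hlaM, hLCn, abs_nonneg (Real.log M)]
    have hnum2 : 2*lam*(|Real.log b| + |LC| + 1) + 16*M
        ≤ (2*KK+16*M+4)*((|Real.log b| * 1+1)*(lam+1)) := by
      rw [hKK]
      exact bound_aux (abs_nonneg _) (abs_nonneg _) hlam0 hM.le
    calc (2*lam*(|Real.log b| + |LC| + 1) + 16*M)/ℓ^2
        ≤ ((2*KK+16*M+4)*((|Real.log b| * 1+1)*(lam+1)))/ℓ^2 :=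
          (div_le_div_iff_of_pos_right (by positivity)).2 hnum2
      _ = (2*KK+16*M+4)*((|Real.log b| * 1+1)*(lam+1)/ℓ^2) := by ring
      _ ≤ (2*KK+16*M+4)*(a^2*(2*ν)*Real.log (1/(a*s)) + (|Real.log b| * 1+1)*(lam+1)/ℓ^2) := by
          apply mul_le_mul_of_nonneg_left ?_ (by positivity)
          linarith only [ht1]
  · -- I0 case
    have hab : a < b := not_le.1 hba
    have hmax : max a b = b := max_eq_right hab.le
    have hlm : logMinus (b/a) = 0 := by
      rw [logMinus, min_eq_right ((one_le_div ha).2 hab.le), Real.log_one, neg_zero]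
    have hR0 : R0 ν a b = I0 (a*s) / I0 (b*s) := by rw [R0, if_neg hba, ← hs_def]
    have hIa : |I0 (a*s) - 1| ≤ (a*s)^2 := I0_sub_one haspos.le (by linarith only [has1])
    have hIb : |I0 (b*s) - 1| ≤ (b*s)^2 := I0_sub_one hbspos.le (by linarith only [hbs1])
    have hbs2 : (b*s)^2 ≤ 1/9 := by
      have h := mul_le_mul hbs1 hbs1 hbspos.le (by norm_num : (0:ℝ) ≤ 1/3)
      rw [pow_two]
      linarith only [h]
    have hIbpos : 8/9 ≤ I0 (b*s) := by
      have h := (abs_le.1 hIb).1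
      linarith only [h, hbs2]
    have hIb0 : 0 < I0 (b*s) := by linarith only [hIbpos]
    have hasbs : (a*s)^2 ≤ (b*s)^2 := by
      have h : a*s ≤ b*s := mul_le_mul_of_nonneg_right hab.le hs0.le
      exact pow_le_pow_left₀ haspos.le h 2
    have hratio : |I0 (a*s)/I0 (b*s) - 1| ≤ 3*(b*s)^2 := by
      have heq : I0 (a*s)/I0 (b*s) - 1 = (I0 (a*s) - I0 (b*s))/I0 (b*s) := by
        rw [sub_div, div_self (ne_of_gt hIb0)]
      rw [heq, abs_div, abs_of_pos hIb0]
      have hnum : |I0 (a*s) - I0 (b*s)| ≤ 2*(b*s)^2 := by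
        calc |I0 (a*s) - I0 (b*s)| = |(I0 (a*s) - 1) - (I0 (b*s) - 1)| := by ring_nf
          _ ≤ |I0 (a*s) - 1| + |I0 (b*s) - 1| := abs_sub _ _
          _ ≤ 2*(b*s)^2 := by linarith only [hIa, hIb, hasbs]
      calc |I0 (a*s) - I0 (b*s)|/I0 (b*s) ≤ (2*(b*s)^2)/(8/9) :=
          div_le_div₀ (by positivity) hnum (by norm_num) hIbpos
        _ ≤ 3*(b*s)^2 := by linarith only [sq_nonneg (b*s)]
    have hlog3 : 1 ≤ Real.log (1/(b*s)) := by
      rw [Real.le_log_iff_exp_le (by positivity)]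
      have h3 : (3:ℝ) ≤ 1/(b*s) := by
        rw [le_div_iff₀ hbspos]; linarith only [hbs1]
      have he := Real.exp_one_lt_d9
      linarith only [h3, he]
    have ht1 : (b*s)^2 ≤ b^2*(2*ν)*Real.log (1/(b*s)) := by
      have hbb : b^2*(2*ν) = (b*s)^2 := by rw [mul_pow, hs2]
      rw [hbb]
      have h := mul_le_mul_of_nonneg_left hlog3 (sq_nonneg (b*s))
      linarith only [h]
    have ht2 : 0 ≤ (|Real.log b| * (0:ℝ)+1)*((0:ℝ)+1)/ℓ^2 := by positivity
    rw [hR0, hlm, hmax, hlogsq, if_neg hba]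
    rw [zero_div, add_zero]
    have ht10 : 0 ≤ b^2*(2*ν)*Real.log (1/(b*s)) := le_trans (sq_nonneg (b*s)) ht1
    have hC3 : (3:ℝ) ≤ 2*KK+16*M+4 := by linarith only [hKK2, hM]
    calc |I0 (a*s)/I0 (b*s) - 1| ≤ 3*(b*s)^2 := hratio
      _ ≤ 3 * (b^2*(2*ν)*Real.log (1/(b*s))) := by linarith only [ht1]
      _ ≤ (2*KK+16*M+4) * (b^2*(2*ν)*Real.log (1/(b*s))) :=
          mul_le_mul_of_nonneg_right hC3 ht10
      _ ≤ (2*KK+16*M+4) * (b^2*(2*ν)*Real.log (1/(b*s)) + (|Real.log b| * 0+1)*(0+1)/ℓ^2) := by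
          apply mul_le_mul_of_nonneg_left ?_ (by positivity)
          linarith only [ht2]

end
end
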